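/- Let S₁ ⊆ S₂ ⊆ ℝⁿ be two rigidly convex sets, and let p be the defining polynomial of S₂. If p vanishes identically on the boundary ∂S₁, then S₁ = S₂. -/
import Mathlib


open MvPolynomial

/-- `𝒞_p(x₀)`: the closure of the connected component of `{x : p(x) > 0}` containing `x₀`. -/
noncomputable def algInt {n : ℕ} (p : MvPolynomial (Fin n) ℝ) (x0 : Fin n → ℝ) :
    Set (Fin n → ℝ) :=
  closure (connectedComponentIn {x : Fin n → ℝ | 0 < eval x p} x0)

/-- The univariate polynomial `t ↦ p(u + t w)`. -/
noncomputable def lineRestrict {n : ℕ} (p : MvPolynomial (Fin n) ℝ) (u w : Fin n → ℝ) :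
    Polynomial ℝ :=
  MvPolynomial.aeval (fun i => Polynomial.C (u i) + Polynomial.X * Polynomial.C (w i)) p

/-- A univariate real polynomial has only real roots: every complex root is real. -/
def OnlyRealRoots (q : Polynomial ℝ) : Prop :=
  ∀ z : ℂ, Polynomial.aeval z q = 0 → z.im = 0

/-- `p` is real zero with respect to `u`. -/
def IsRealZeroAt {n : ℕ} (p : MvPolynomial (Fin n) ℝ) (u : Fin n → ℝ) : Prop :=
  0 < eval u p ∧ ∀ w : Fin n → ℝ, w ≠ 0 → OnlyRealRoots (lineRestrict p u w)

/-- `p` is the defining polynomial of the algebraic interior `S`: it realizes `S` and has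
minimal degree among all polynomials realizing `S`. -/
def IsDefiningPoly {n : ℕ} (S : Set (Fin n → ℝ)) (p : MvPolynomial (Fin n) ℝ) : Prop :=
  (∃ x0 : Fin n → ℝ, 0 < eval x0 p ∧ S = algInt p x0) ∧
    ∀ (q : MvPolynomial (Fin n) ℝ) (x0' : Fin n → ℝ), 0 < eval x0' q → S = algInt q x0' →
      p.totalDegree ≤ q.totalDegree

/-- A rigidly convex set: an algebraic interior whose defining polynomial is real zero with
respect to some interior point. -/
def RigidlyConvex {n : ℕ} (S : Set (Fin n → ℝ)) : Prop :=
  ∃ p : MvPolynomial (Fin n) ℝ, IsDefiningPoly S p ∧ ∃ u ∈ interior S, IsRealZeroAt p u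

lemma isPreconnected_inter_frontier_nonempty {α : Type*} [TopologicalSpace α] {C t : Set α}
    (hC : IsPreconnected C) (h1 : (C ∩ t).Nonempty) (h2 : (C \ t).Nonempty) :
    (C ∩ frontier t).Nonempty := by
  by_contra h
  rw [Set.not_nonempty_iff_eq_empty] at h
  have hdisj : ∀ x ∈ C, x ∉ frontier t := by
    intro x hx hfx
    exact absurd (Set.mem_inter hx hfx) (by rw [h]; exact Set.notMem_empty x)
  have key := hC (interior t) (closure t)ᶜ isOpen_interior isClosed_closure.isOpen_compl
    (by
      intro x hx
      by_cases hxc : x ∈ closure t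
      · left
        by_contra hxi
        exact hdisj x hx ⟨hxc, hxi⟩
      · right; exact hxc)
    (by
      obtain ⟨z, hzC, hzt⟩ := h1
      refine ⟨z, hzC, ?_⟩
      by_contra hzi
      exact hdisj z hzC ⟨subset_closure hzt, hzi⟩)
    (by
      obtain ⟨y, hyC, hyt⟩ := h2
      refine ⟨y, hyC, fun hyc => ?_⟩
      exact hdisj y hyC ⟨hyc, fun hyi => hyt (interior_subset hyi)⟩)
  obtain ⟨w, _, hwi, hwc⟩ := key
  exact hwc (subset_closure (interior_subset hwi))

/-- If `S₁ ⊆ S₂` are rigidly convex and the defining polynomial `p` of `S₂`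
vanishes identically on `∂S₁`, then `S₁ = S₂`. -/
theorem rigidlyConvex_eq_of_defining_vanishes_on_boundary (n : ℕ)
    (S1 S2 : Set (Fin n → ℝ)) (h1 : RigidlyConvex S1) (h2 : RigidlyConvex S2)
    (hsub : S1 ⊆ S2) (p : MvPolynomial (Fin n) ℝ) (hp : IsDefiningPoly S2 p)
    (hvan : ∀ a ∈ frontier S1, eval a p = 0) : S1 = S2 := by
  obtain ⟨x0, hx0, hS2⟩ := hp.1
  obtain ⟨p1, hp1, _⟩ := h1
  obtain ⟨x1, hx1, hS1⟩ := hp1.1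
  set C2 : Set (Fin n → ℝ) := connectedComponentIn {x : Fin n → ℝ | 0 < eval x p} x0 with hC2def
  have hC2pos : C2 ⊆ {x : Fin n → ℝ | 0 < eval x p} := connectedComponentIn_subset _ _
  set C1 : Set (Fin n → ℝ) := connectedComponentIn {x : Fin n → ℝ | 0 < eval x p1} x1 with hC1def
  have hS1closed : IsClosed S1 := by rw [hS1]; exact isClosed_closure
  have hC1open : IsOpen C1 := by
    apply IsOpen.connectedComponentIn
    exact isOpen_lt continuous_const (MvPolynomial.continuous_eval p1)
  have hx1C1 : x1 ∈ C1 := mem_connectedComponentIn hx1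
  -- C1 is a nonempty open set inside S2 = closure C2, so C1 meets C2
  have hC1S1 : C1 ⊆ S1 := by rw [hS1]; exact subset_closure
  have hx1S2 : x1 ∈ closure C2 := by
    have : x1 ∈ S2 := hsub (hC1S1 hx1C1)
    rwa [hS2] at this
  obtain ⟨z, hzC1, hzC2⟩ := mem_closure_iff.mp hx1S2 C1 hC1open hx1C1
  -- show C2 ⊆ S1
  have hC2S1 : C2 ⊆ S1 := by
    by_contra hcon
    rw [Set.not_subset] at hcon
    obtain ⟨y, hyC2, hyS1⟩ := hcon
    obtain ⟨a, haC2, hafr⟩ := isPreconnected_inter_frontier_nonempty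
      (isPreconnected_connectedComponentIn) ⟨z, hzC2, hC1S1 hzC1⟩ ⟨y, hyC2, hyS1⟩
    have := hC2pos haC2
    rw [Set.mem_setOf_eq, hvan a hafr] at this
    exact lt_irrefl 0 this
  refine Set.Subset.antisymm hsub ?_
  rw [hS2]
  calc closure C2 ⊆ closure S1 := closure_mono hC2S1
    _ = S1 := hS1closed.closure_eq
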